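/- Every tree G whose diameter is larger than three contains a path P = v a b c w (on five consecutive vertices) such that (i) v is a leaf of G, and (ii) the depth of T_{G,P}(a) is at most one. -/

import Mathlib

open SimpleGraph

namespace SwapGame

/-- The set of vertices within distance `k` of `u` in `G` (the `k`-neighborhood). -/
def ball {V : Type} (G : SimpleGraph V) (u : V) (k : ℕ) : Set V :=
  {v | G.edist u v ≤ (k : ℕ∞)}

/-- The graph obtained from `G` by the edge swap `(v, w)` at `u`:
remove the edge `{u, v}` and add the edge `{u, w}`. -/
def swapGraph {V : Type} (G : SimpleGraph V) (u v w : V) : SimpleGraph V :=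
  SimpleGraph.fromEdgeSet ((G.edgeSet \ {s(u, v)}) ∪ {s(u, w)})

/-- The edge swap `(v, w)` at `u` is a legal move for a player with `k`-local information:
`v` is a neighbor of `u` and `w` is a non-neighbor (other than `u`) within distance `k`. -/
def ValidSwap {V : Type} (G : SimpleGraph V) (k : ℕ) (u v w : V) : Prop :=
  G.Adj u v ∧ G.edist u w ≤ (k : ℕ∞) ∧ ¬ G.Adj u w ∧ w ≠ u

/-- `H` (a graph on `W`, with `ι` identifying the view inside `H`) is a finite connected
graph compatible with `u`'s `k`-local view in `G`. -/
def Compatible {V : Type} (G : SimpleGraph V) (k : ℕ) (u : V)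
    {W : Type} (H : SimpleGraph W) (ι : V → W) : Prop :=
  Finite W ∧ H.Connected ∧ Set.InjOn ι (ball G u k) ∧
  {x : W | H.edist (ι u) x ≤ (k : ℕ∞)} = ι '' ball G u k ∧
  ∀ a ∈ ball G u k, ∀ b ∈ ball G u k, (H.Adj (ι a) (ι b) ↔ G.Adj a b)

/-- SUM-cost of player `u` in `H` (`⊤` when `H` is disconnected). -/
noncomputable def cSum {W : Type} (H : SimpleGraph W) (u : W) : ℕ∞ :=
  ∑' v, H.edist u v

/-- MAX-cost (eccentricity) of player `u` in `H` (`⊤` when `H` is disconnected). -/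
noncomputable def cMax {W : Type} (H : SimpleGraph W) (u : W) : ℕ∞ :=
  ⨆ v, H.edist u v

/-- A pessimistic player `u` with `k`-local information is unhappy in `G` w.r.t. the
SUM-cost via the edge swap `(v, w)`: the swap strictly decreases `u`'s cost in every
compatible global graph. -/
def UnhappySumVia {V : Type} (G : SimpleGraph V) (k : ℕ) (u v w : V) : Prop :=
  ValidSwap G k u v w ∧
  ∀ (W : Type) (H : SimpleGraph W) (ι : V → W), Compatible G k u H ι →
    cSum (swapGraph H (ι u) (ι v) (ι w)) (ι u) < cSum H (ι u)

/-- Pessimistic unhappiness w.r.t. the MAX-cost via the edge swap `(v, w)`. -/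
def UnhappyMaxVia {V : Type} (G : SimpleGraph V) (k : ℕ) (u v w : V) : Prop :=
  ValidSwap G k u v w ∧
  ∀ (W : Type) (H : SimpleGraph W) (ι : V → W), Compatible G k u H ι →
    cMax (swapGraph H (ι u) (ι v) (ι w)) (ι u) < cMax H (ι u)

/-- Weakly pessimistic unhappiness w.r.t. the SUM-cost via the edge swap `(v, w)`:
the swap does not increase `u`'s cost in any compatible global graph. -/
def WeakUnhappySumVia {V : Type} (G : SimpleGraph V) (k : ℕ) (u v w : V) : Prop :=
  ValidSwap G k u v w ∧
  ∀ (W : Type) (H : SimpleGraph W) (ι : V → W), Compatible G k u H ι →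
    cSum (swapGraph H (ι u) (ι v) (ι w)) (ι u) ≤ cSum H (ι u)

/-- Weakly pessimistic unhappiness w.r.t. the MAX-cost via the edge swap `(v, w)`. -/
def WeakUnhappyMaxVia {V : Type} (G : SimpleGraph V) (k : ℕ) (u v w : V) : Prop :=
  ValidSwap G k u v w ∧
  ∀ (W : Type) (H : SimpleGraph W) (ι : V → W), Compatible G k u H ι →
    cMax (swapGraph H (ι u) (ι v) (ι w)) (ι u) ≤ cMax H (ι u)

/-- Optimistic unhappiness w.r.t. the SUM-cost via the edge swap `(v, w)`:
the swap strictly decreases `u`'s cost in some compatible global graph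
(with the swapped graph connected). -/
def OptUnhappySumVia {V : Type} (G : SimpleGraph V) (k : ℕ) (u v w : V) : Prop :=
  ValidSwap G k u v w ∧
  ∃ (W : Type) (H : SimpleGraph W) (ι : V → W), Compatible G k u H ι ∧
    (swapGraph H (ι u) (ι v) (ι w)).Connected ∧
    cSum (swapGraph H (ι u) (ι v) (ι w)) (ι u) < cSum H (ι u)

/-- Optimistic unhappiness w.r.t. the MAX-cost via the edge swap `(v, w)`. -/
def OptUnhappyMaxVia {V : Type} (G : SimpleGraph V) (k : ℕ) (u v w : V) : Prop :=
  ValidSwap G k u v w ∧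
  ∃ (W : Type) (H : SimpleGraph W) (ι : V → W), Compatible G k u H ι ∧
    (swapGraph H (ι u) (ι v) (ι w)).Connected ∧
    cMax (swapGraph H (ι u) (ι v) (ι w)) (ι u) < cMax H (ι u)

/-- Sum-swap equilibrium for pessimistic players with `k`-local information. -/
def SumEquilibrium {V : Type} (G : SimpleGraph V) (k : ℕ) : Prop :=
  ∀ u : V, ¬ ∃ v w, UnhappySumVia G k u v w

/-- Max-swap equilibrium for pessimistic players with `k`-local information. -/
def MaxEquilibrium {V : Type} (G : SimpleGraph V) (k : ℕ) : Prop :=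
  ∀ u : V, ¬ ∃ v w, UnhappyMaxVia G k u v w

/-- Sum-swap equilibrium for weakly pessimistic players with `k`-local information. -/
def WeakSumEquilibrium {V : Type} (G : SimpleGraph V) (k : ℕ) : Prop :=
  ∀ u : V, ¬ ∃ v w, WeakUnhappySumVia G k u v w

/-- Max-swap equilibrium for weakly pessimistic players with `k`-local information. -/
def WeakMaxEquilibrium {V : Type} (G : SimpleGraph V) (k : ℕ) : Prop :=
  ∀ u : V, ¬ ∃ v w, WeakUnhappyMaxVia G k u v w

/-- Sum-swap equilibrium for optimistic players with `k`-local information. -/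
def OptSumEquilibrium {V : Type} (G : SimpleGraph V) (k : ℕ) : Prop :=
  ∀ u : V, ¬ ∃ v w, OptUnhappySumVia G k u v w

/-- Max-swap equilibrium for optimistic players with `k`-local information. -/
def OptMaxEquilibrium {V : Type} (G : SimpleGraph V) (k : ℕ) : Prop :=
  ∀ u : V, ¬ ∃ v w, OptUnhappyMaxVia G k u v w

/-- Social SUM-cost of a (connected, finite) graph, as a natural number. -/
noncomputable def scSum {W : Type} [Fintype W] (H : SimpleGraph W) : ℕ :=
  ∑ u : W, ∑ v : W, H.dist u v

/-- Social MAX-cost of a (connected, finite) graph, as a natural number. -/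
noncomputable def scMax {W : Type} [Fintype W] (H : SimpleGraph W) : ℕ :=
  ∑ u : W, Finset.univ.sup (H.dist u)

/-- Price of anarchy over `n`-vertex trees for a given notion of equilibrium and
social cost: (max social cost of an equilibrium tree) / (min social cost of a tree). -/
noncomputable def PoA (n : ℕ) (eqPred : SimpleGraph (Fin n) → Prop)
    (sc : SimpleGraph (Fin n) → ℕ) : ℚ :=
  ((sSup {m : ℕ | ∃ T : SimpleGraph (Fin n), T.IsTree ∧ eqPred T ∧ sc T = m} : ℕ) : ℚ) /
  ((sInf {m : ℕ | ∃ T : SimpleGraph (Fin n), T.IsTree ∧ sc T = m} : ℕ) : ℚ)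

open SimpleGraph.Walk

private lemma path_unique' {V : Type} {G : SimpleGraph V} (hG : G.IsTree) {u v : V}
    {p q : G.Walk u v} (hp : p.IsPath) (hq : q.IsPath) : p = q :=
  ((hG.existsUnique_path u v).unique hp hq)

private lemma path_length_eq_dist {V : Type} {G : SimpleGraph V} (hG : G.IsTree) {u v : V}
    {p : G.Walk u v} (hp : p.IsPath) : p.length = G.dist u v := by
  obtain ⟨q, hq, hql⟩ := hG.isConnected.exists_path_of_dist u v
  rw [path_unique' hG hp hq, hql]

private lemma path_avoids {V : Type} {G : SimpleGraph V} (hG : G.IsTree) {S : Set (Sym2 V)}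
    {u v : V} (h : (G.deleteEdges S).Reachable u v) {p : G.Walk u v} (hp : p.IsPath) :
    ∀ e ∈ p.edges, e ∉ S := by
  classical
  obtain ⟨w'⟩ := h
  have hw'G : ∀ e ∈ w'.edges, e ∈ G.edgeSet := fun e he => by
    have := w'.edges_subset_edgeSet he
    rw [edgeSet_deleteEdges] at this
    exact this.1
  set w : G.Walk u v := w'.transfer G hw'G with hw
  have hedges : ∀ e ∈ w.edges, e ∉ S := by
    rw [hw, edges_transfer]
    intro e he
    have := w'.edges_subset_edgeSet he
    rw [edgeSet_deleteEdges] at this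
    exact this.2
  have hpeq : p = w.bypass := path_unique' hG hp w.bypass_isPath
  intro e hep
  rw [hpeq] at hep
  exact hedges e (w.edges_bypass_subset hep)

theorem stmt12 {V : Type} [Fintype V] (G : SimpleGraph V) [DecidableRel G.Adj]
    (hG : G.IsTree) (hdiam : ∃ x y : V, 3 < G.edist x y) :
    ∃ v a b c w : V, G.Adj v a ∧ G.Adj a b ∧ G.Adj b c ∧ G.Adj c w ∧
      v ≠ b ∧ v ≠ c ∧ v ≠ w ∧ a ≠ c ∧ a ≠ w ∧ b ≠ w ∧
      G.degree v = 1 ∧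
      ∀ x : V, (G.deleteEdges {s(v, a), s(a, b), s(b, c), s(c, w)}).Reachable a x →
        (G.deleteEdges {s(v, a), s(a, b), s(b, c), s(c, w)}).edist a x ≤ 1 := by
  classical
  obtain ⟨x0, y0, hxy0⟩ := hdiam
  have hne : Nonempty V := ⟨x0⟩
  obtain ⟨⟨x, y⟩, hmax⟩ := Finite.exists_max (fun p : V × V => G.dist p.1 p.2)
  simp only at hmax
  have hd0 : 4 ≤ G.dist x0 y0 := by
    have hr : G.Reachable x0 y0 := hG.isConnected x0 y0
    have hne' : G.edist x0 y0 ≠ ⊤ := edist_ne_top_iff_reachable.mpr hr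
    have : G.edist x0 y0 = (G.dist x0 y0 : ℕ∞) := (ENat.coe_toNat hne').symm
    rw [this] at hxy0
    exact_mod_cast hxy0
  have hxy4 : 4 ≤ G.dist x y := le_trans hd0 (hmax (x0, y0))
  obtain ⟨p, hp, hplen⟩ := hG.isConnected.exists_path_of_dist x y
  have hlen4 : 4 ≤ p.length := by rw [hplen]; exact hxy4
  cases p with
  | nil => simp at hlen4
  | cons h1 p1 =>
  cases p1 with
  | nil => simp at hlen4
  | cons h2 p2 =>
  cases p2 with
  | nil => simp [Nat.succ_le] at hlen4
  | cons h3 p3 =>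
  cases p3 with
  | nil => simp [Nat.succ_le] at hlen4
  | cons h4 p5 =>
  rename_i a b c w
  -- now h1 : G.Adj x a, h2 : G.Adj a b, h3 : G.Adj b c, h4 : G.Adj c w, p5 : G.Walk w y
  have hnd := hp.support_nodup
  simp only [support_cons, List.nodup_cons, List.mem_cons] at hnd
  push_neg at hnd
  refine ⟨x, a, b, c, w, h1, h2, h3, h4, ?_, ?_, ?_, ?_, ?_, ?_, ?_, ?_⟩
  · exact hnd.1.2.1
  · exact hnd.1.2.2.1
  · exact fun h => hnd.1.2.2.2 (h ▸ p5.start_mem_support)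
  · exact hnd.2.1.2.1
  · exact fun h => hnd.2.1.2.2 (h ▸ p5.start_mem_support)
  · exact fun h => hnd.2.2.1.2 (h ▸ p5.start_mem_support)
  · -- degree
    have hnb : ∀ z, G.Adj x z → z = a := by
      intro z hz
      obtain ⟨q, hq, hql⟩ := hG.isConnected.exists_path_of_dist z y
      have hzx : z ≠ x := fun h => G.loopless.irrefl x (h ▸ hz)
      have hxq : x ∉ q.support := by
        intro hxs
        have hdr : G.dist x y ≤ (q.dropUntil x hxs).length := dist_le _
        have hsum := congrArg Walk.length (q.take_spec hxs)
        rw [length_append] at hsum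
        have htk : 0 < (q.takeUntil x hxs).length := by
          rcases Nat.eq_zero_or_pos (q.takeUntil x hxs).length with h0 | h0
          · exact absurd (eq_of_length_eq_zero h0) hzx
          · exact h0
        have hzy : G.dist z y ≤ G.dist x y := hmax (z, y)
        omega
      have hQ : (Walk.cons hz q).IsPath := hq.cons hxq
      have heq := path_unique' hG hQ hp
      have := congrArg (fun W => W.getVert 1) heq
      simpa [getVert_cons_succ] using this
    have : G.neighborFinset x = {a} := by
      ext z
      simp only [mem_neighborFinset, Finset.mem_singleton]
      exact ⟨hnb z, fun h => h ▸ h1⟩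
    rw [← card_neighborFinset_eq_degree, this, Finset.card_singleton]
  · -- depth
    intro x' hreach
    set S : Set (Sym2 V) := {s(x, a), s(a, b), s(b, c), s(c, w)} with hS
    set G' := G.deleteEdges S with hG'
    obtain ⟨P0, hP0, hP0len⟩ := hG.isConnected.exists_path_of_dist a x'
    have havoid : ∀ e ∈ P0.edges, e ∉ S := path_avoids hG hreach hP0
    have hP0edges : ∀ e ∈ P0.edges, e ∈ G'.edgeSet := fun e he => by
      rw [hG', edgeSet_deleteEdges]
      exact ⟨P0.edges_subset_edgeSet he, havoid e he⟩
    set P0' : G'.Walk a x' := P0.transfer G' hP0edges with hP0'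
    suffices hlen1 : P0.length ≤ 1 by
      calc G'.edist a x' ≤ P0'.length := edist_le _
        _ = (P0.length : ℕ∞) := by rw [hP0', length_transfer]
        _ ≤ 1 := by exact_mod_cast hlen1
    by_contra hgt
    push_neg at hgt
    have hgt2 : 2 ≤ P0.length := hgt
    set q1 : G.Walk a y := Walk.cons h2 (Walk.cons h3 (Walk.cons h4 p5)) with hq1def
    set q2 : G.Walk b y := Walk.cons h3 (Walk.cons h4 p5) with hq2def
    have hq1 : q1.IsPath := hp.of_cons
    have hq2 : q2.IsPath := hq1.of_cons
    have haq2 : a ∉ q2.support := by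
      have := hq1
      rw [hq1def, cons_isPath_iff] at this
      exact this.2
    -- z in P0.support is G'-reachable from a
    have hreachz : ∀ z ∈ P0.support, G'.Reachable a z := by
      intro z hzs
      have hz' : z ∈ P0'.support := by rw [hP0', support_transfer]; exact hzs
      exact ⟨P0'.takeUntil z hz'⟩
    -- z in q2.support is not G'-reachable from a
    have hnreach : ∀ z ∈ q2.support, ¬ G'.Reachable a z := by
      intro z hzs hr
      have hQt : (q2.takeUntil z hzs).IsPath := hq2.takeUntil hzs
      have haQt : a ∉ (q2.takeUntil z hzs).support :=
        fun h => haq2 (q2.support_takeUntil_subset hzs h)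
      have hQz : (Walk.cons h2 (q2.takeUntil z hzs)).IsPath := hQt.cons haQt
      have havz := path_avoids hG hr hQz
      refine havz s(a, b) ?_ ?_
      · simp [edges_cons]
      · simp [hS]
    -- the appended walk is a path
    set W : G.Walk x' y := P0.reverse.append q1 with hWdef
    have hW : W.IsPath := by
      apply IsPath.mk'
      rw [hWdef, support_append, support_reverse]
      have hq1supp : q1.support = a :: q2.support := by
        rw [hq1def, hq2def, support_cons]
      rw [hq1supp]
      simp only [List.tail_cons]
      rw [List.nodup_append]
      refine ⟨List.nodup_reverse.mpr hP0.support_nodup, hq2.support_nodup, ?_⟩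
      intro z hz1 z' hz2 hzz
      subst hzz
      exact hnreach z hz2 (hreachz z (List.mem_reverse.mp hz1))
    have hWd : W.length = G.dist x' y := path_length_eq_dist hG hW
    have hWlen : W.length = P0.length + q1.length := by
      rw [hWdef, length_append, length_reverse]
    have hq1len : q1.length + 1 = G.dist x y := by
      rw [← hplen]; simp [hq1def]
    have hle : G.dist x' y ≤ G.dist x y := hmax (x', y)
    omega


end SwapGame
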